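/- For every λ > 0 and every real ν, the absolutely convergent integral (3/(4π)) · ∫₀^∞ [sin⁴(λt/4) / (λ³ (t/4)⁴)] · cos(νt) dt equals E(ν/λ); that is, it equals 1 − 6(ν/λ)² + 6(|ν|/λ)³ for |ν| ≤ λ/2, equals 2(1 − |ν|/λ)³ for λ/2 ≤ |ν| ≤ λ, and equals 0 for |ν| ≥ λ. -/

import Mathlib

open MeasureTheory

/-- The sieving kernel `E`: `E(ν) = 1 - 6ν² + 6|ν|³` for `|ν| ≤ 1/2`,
`E(ν) = 2(1-|ν|)³` for `1/2 ≤ |ν| ≤ 1`, and `E(ν) = 0` for `|ν| ≥ 1`. -/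
noncomputable def Ekernel (ν : ℝ) : ℝ :=
  if |ν| ≤ 1 / 2 then 1 - 6 * ν ^ 2 + 6 * |ν| ^ 3
  else if |ν| ≤ 1 then 2 * (1 - |ν|) ^ 3
  else 0

section SinPowFourKernelAux

open Real Set

lemma Ekernel_even (x : ℝ) : Ekernel (-x) = Ekernel x := by
  simp [Ekernel, abs_neg, neg_sq]

lemma Ekernel_zero_of_one_le {x : ℝ} (hx : 1 ≤ |x|) : Ekernel x = 0 := by
  unfold Ekernel
  split_ifs with h1 h2
  · linarith
  · have : |x| = 1 := le_antisymm h2 hx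
    rw [this]; ring
  · rfl

lemma hasDerivAt_F1 {c : ℝ} (hc : c ≠ 0) (y : ℝ) :
    HasDerivAt (fun y : ℝ =>
      ((1 - 6*y^2 + 6*y^3)/c + (12 - 36*y)/c^3) * Real.sin (c*y)
        + ((-12*y + 18*y^2)/c^2 - 36/c^4) * Real.cos (c*y))
      ((1 - 6*y^2 + 6*y^3) * Real.cos (c*y)) y := by
  have hid : HasDerivAt (fun y : ℝ => c * y) c y := by
    simpa using (hasDerivAt_id y).const_mul c
  have hs : HasDerivAt (fun y : ℝ => Real.sin (c*y)) (Real.cos (c*y) * c) y :=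
    (Real.hasDerivAt_sin (c*y)).comp y hid
  have hcc : HasDerivAt (fun y : ℝ => Real.cos (c*y)) (-Real.sin (c*y) * c) y :=
    (Real.hasDerivAt_cos (c*y)).comp y hid
  have hy2 : HasDerivAt (fun y : ℝ => y^2) (2*y) y := by simpa using hasDerivAt_pow 2 y
  have hy3 : HasDerivAt (fun y : ℝ => y^3) (3*y^2) y := by simpa using hasDerivAt_pow 3 y
  have hp1 : HasDerivAt (fun y : ℝ => (1 - 6*y^2 + 6*y^3)/c + (12 - 36*y)/c^3)
      ((-12*y + 18*y^2)/c + (-36)/c^3) y := by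
    have ha : HasDerivAt (fun y : ℝ => (1 - 6*y^2 + 6*y^3)) (-12*y + 18*y^2) y := by
      have := ((hasDerivAt_const y (1:ℝ)).sub (hy2.const_mul 6)).add (hy3.const_mul 6)
      exact this.congr_deriv (by ring)
    have hb : HasDerivAt (fun y : ℝ => (12 - 36*y)) (-36 : ℝ) y := by
      have := (hasDerivAt_const y (12:ℝ)).sub ((hasDerivAt_id y).const_mul 36)
      exact this.congr_deriv (by ring)
    exact (ha.div_const c).add (hb.div_const (c^3))
  have hp2 : HasDerivAt (fun y : ℝ => (-12*y + 18*y^2)/c^2 - 36/c^4)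
      ((-12 + 36*y)/c^2) y := by
    have ha : HasDerivAt (fun y : ℝ => (-12*y + 18*y^2)) (-12 + 36*y) y := by
      have := (((hasDerivAt_id y).const_mul (-12:ℝ))).add (hy2.const_mul 18)
      exact this.congr_deriv (by ring)
    have := (ha.div_const (c^2)).sub (hasDerivAt_const y (36/c^4))
    exact this.congr_deriv (by ring)
  have H := (hp1.mul hs).add (hp2.mul hcc)
  exact H.congr_deriv (by field_simp; ring)

lemma hasDerivAt_F2 {c : ℝ} (hc : c ≠ 0) (y : ℝ) :
    HasDerivAt (fun y : ℝ =>
      (2*(1-y)^3/c - 12*(1-y)/c^3) * Real.sin (c*y)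
        + (-6*(1-y)^2/c^2 + 12/c^4) * Real.cos (c*y))
      (2*(1-y)^3 * Real.cos (c*y)) y := by
  have hid : HasDerivAt (fun y : ℝ => c * y) c y := by
    simpa using (hasDerivAt_id y).const_mul c
  have hs : HasDerivAt (fun y : ℝ => Real.sin (c*y)) (Real.cos (c*y) * c) y :=
    (Real.hasDerivAt_sin (c*y)).comp y hid
  have hcc : HasDerivAt (fun y : ℝ => Real.cos (c*y)) (-Real.sin (c*y) * c) y :=
    (Real.hasDerivAt_cos (c*y)).comp y hid
  have hone : HasDerivAt (fun y : ℝ => 1 - y) (-1 : ℝ) y := by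
    exact ((hasDerivAt_const y (1:ℝ)).sub (hasDerivAt_id y)).congr_deriv (by ring)
  have h3 : HasDerivAt (fun y : ℝ => (1-y)^3) (-3*(1-y)^2) y := by
    have := (hone.pow 3)
    exact this.congr_deriv (by ring)
  have h2 : HasDerivAt (fun y : ℝ => (1-y)^2) (-2*(1-y)) y := by
    have := (hone.pow 2)
    exact this.congr_deriv (by ring)
  have hp1 : HasDerivAt (fun y : ℝ => 2*(1-y)^3/c - 12*(1-y)/c^3)
      (-6*(1-y)^2/c + 12/c^3) y := by
    have := ((h3.const_mul 2).div_const c).sub ((hone.const_mul 12).div_const (c^3))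
    exact this.congr_deriv (by ring)
  have hp2 : HasDerivAt (fun y : ℝ => -6*(1-y)^2/c^2 + 12/c^4)
      (12*(1-y)/c^2) y := by
    have := ((h2.const_mul (-6:ℝ)).div_const (c^2)).add (hasDerivAt_const y (12/c^4))
    exact this.congr_deriv (by ring)
  have H := (hp1.mul hs).add (hp2.mul hcc)
  exact H.congr_deriv (by field_simp; ring)

lemma Ekernel_eq_G (x : ℝ) : Ekernel x
    = |1+x|^3 + |1-x|^3 - 4*|1/2+x|^3 - 4*|1/2-x|^3 + 6*|x|^3 := by
  have key : ∀ y : ℝ, 0 ≤ y → Ekernel y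
      = |1+y|^3 + |1-y|^3 - 4*|1/2+y|^3 - 4*|1/2-y|^3 + 6*|y|^3 := by
    intro y hy
    rw [abs_of_nonneg hy, abs_of_nonneg (by linarith : (0:ℝ) ≤ 1 + y),
      abs_of_nonneg (by linarith : (0:ℝ) ≤ 1/2 + y)]
    unfold Ekernel
    rw [abs_of_nonneg hy]
    split_ifs with h1 h2
    · rw [abs_of_nonneg (by linarith : (0:ℝ) ≤ 1 - y),
        abs_of_nonneg (by linarith : (0:ℝ) ≤ 1/2 - y)]
      ring
    · push_neg at h1
      rw [abs_of_nonneg (by linarith : (0:ℝ) ≤ 1 - y),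
        abs_of_nonpos (by linarith : (1/2 - y : ℝ) ≤ 0)]
      ring
    · push_neg at h1 h2
      rw [abs_of_nonpos (by linarith : (1 - y : ℝ) ≤ 0),
        abs_of_nonpos (by linarith : (1/2 - y : ℝ) ≤ 0)]
      ring
  rcases le_or_gt 0 x with hx | hx
  · exact key x hx
  · have h1 : Ekernel x = Ekernel (-x) := by simp [Ekernel, abs_neg, neg_sq]
    rw [h1, key (-x) (by linarith)]
    rw [show (1 + -x : ℝ) = 1 - x by ring, show (1 - -x : ℝ) = 1 + x by ring,
      show (1/2 + -x : ℝ) = 1/2 - x by ring, show (1/2 - -x : ℝ) = 1/2 + x by ring,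
      abs_neg]
    ring

lemma Ekernel_continuous : Continuous Ekernel := by
  have : Ekernel = fun x => |1+x|^3 + |1-x|^3 - 4*|1/2+x|^3 - 4*|1/2-x|^3 + 6*|x|^3 :=
    funext Ekernel_eq_G
  rw [this]
  fun_prop

lemma integral_E_cos01 {c : ℝ} (hc : c ≠ 0) :
    ∫ y in (0:ℝ)..1, Ekernel y * Real.cos (c*y)
      = (12*Real.cos c - 48*Real.cos (c/2) + 36)/c^4 := by
  have hcontE : Continuous fun y : ℝ => Ekernel y * Real.cos (c*y) := by
    exact Ekernel_continuous.mul (by fun_prop)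
  have hcont1 : Continuous fun y : ℝ => (1 - 6*y^2 + 6*y^3) * Real.cos (c*y) := by
    fun_prop
  have hcont2 : Continuous fun y : ℝ => 2*(1-y)^3 * Real.cos (c*y) := by fun_prop
  have h1 : ∫ y in (0:ℝ)..(1/2), Ekernel y * Real.cos (c*y)
      = ∫ y in (0:ℝ)..(1/2), (1 - 6*y^2 + 6*y^3) * Real.cos (c*y) := by
    apply intervalIntegral.integral_congr
    intro y hy
    rw [Set.uIcc_of_le (by norm_num)] at hy
    have hy0 : (0:ℝ) ≤ y := hy.1
    have hle : |y| ≤ 1/2 := abs_le.mpr ⟨by linarith, hy.2⟩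
    simp only [Ekernel]
    rw [if_pos hle, abs_of_nonneg hy0]
  have h2 : ∫ y in (1/2 : ℝ)..1, Ekernel y * Real.cos (c*y)
      = ∫ y in (1/2 : ℝ)..1, 2*(1-y)^3 * Real.cos (c*y) := by
    apply intervalIntegral.integral_congr
    intro y hy
    rw [Set.uIcc_of_le (by norm_num)] at hy
    have hy0 : (0:ℝ) ≤ y := by linarith [hy.1]
    have hy1 : |y| ≤ 1 := abs_le.mpr ⟨by linarith, hy.2⟩
    rcases eq_or_lt_of_le hy.1 with h | h
    · simp only [Ekernel, abs_of_nonneg hy0]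
      rw [if_pos (le_of_eq h.symm), ← h]; norm_num
    · simp only [Ekernel, abs_of_nonneg hy0]
      rw [if_neg (by linarith), if_pos hy.2]
  have e1 : ∫ y in (0:ℝ)..(1/2), (1 - 6*y^2 + 6*y^3) * Real.cos (c*y)
      = (((1 - 6*(1/2:ℝ)^2 + 6*(1/2:ℝ)^3)/c + (12 - 36*(1/2:ℝ))/c^3) * Real.sin (c*(1/2))
        + ((-12*(1/2:ℝ) + 18*(1/2:ℝ)^2)/c^2 - 36/c^4) * Real.cos (c*(1/2)))
        - (((1 - 6*(0:ℝ)^2 + 6*(0:ℝ)^3)/c + (12 - 36*(0:ℝ))/c^3) * Real.sin (c*0)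
        + ((-12*(0:ℝ) + 18*(0:ℝ)^2)/c^2 - 36/c^4) * Real.cos (c*0)) :=
    intervalIntegral.integral_eq_sub_of_hasDerivAt
      (fun y _ => hasDerivAt_F1 hc y) (hcont1.intervalIntegrable _ _)
  have e2 : ∫ y in (1/2:ℝ)..1, 2*(1-y)^3 * Real.cos (c*y)
      = ((2*(1-(1:ℝ))^3/c - 12*(1-(1:ℝ))/c^3) * Real.sin (c*1)
        + (-6*(1-(1:ℝ))^2/c^2 + 12/c^4) * Real.cos (c*1))
        - ((2*(1-(1/2:ℝ))^3/c - 12*(1-(1/2:ℝ))/c^3) * Real.sin (c*(1/2))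
        + (-6*(1-(1/2:ℝ))^2/c^2 + 12/c^4) * Real.cos (c*(1/2))) :=
    intervalIntegral.integral_eq_sub_of_hasDerivAt
      (fun y _ => hasDerivAt_F2 hc y) (hcont2.intervalIntegrable _ _)
  have split : ∫ y in (0:ℝ)..1, Ekernel y * Real.cos (c*y)
      = (∫ y in (0:ℝ)..(1/2), Ekernel y * Real.cos (c*y))
        + ∫ y in (1/2:ℝ)..1, Ekernel y * Real.cos (c*y) :=
    (intervalIntegral.integral_add_adjacent_intervals
      (hcontE.intervalIntegrable _ _) (hcontE.intervalIntegrable _ _)).symm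
  rw [split, h1, h2, e1, e2,
    show c*(1/2) = c/2 by ring, show c*(0:ℝ) = 0 by ring, mul_one,
    Real.sin_zero, Real.cos_zero]
  field_simp
  ring

lemma trig_id (x : ℝ) : 12*Real.cos (4*x) - 48*Real.cos (2*x) + 36 = 96 * Real.sin x ^ 4 := by
  have h4 : Real.cos (4*x) = 2 * Real.cos (2*x)^2 - 1 := by
    rw [show (4:ℝ)*x = 2*(2*x) by ring, Real.cos_two_mul]
  rw [h4, Real.cos_two_mul]
  have h := Real.sin_sq_add_cos_sq x
  nlinarith [h]

/-- Fourier cosine transform of `Ekernel (·/lam)`. -/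
lemma integral_E_cos_real (lam : ℝ) (hlam : 0 < lam) {s : ℝ} (hs : s ≠ 0) :
    ∫ v : ℝ, Ekernel (v/lam) * Real.cos (s*v)
      = 192 * lam * Real.sin (s*lam/4)^4 / (s*lam)^4 := by
  have hg_cont : Continuous fun v : ℝ => Ekernel (v/lam) * Real.cos (s*v) := by
    exact (Ekernel_continuous.comp (by fun_prop)).mul (by fun_prop)
  -- evenness
  have heven : (fun v : ℝ => Ekernel (v/lam) * Real.cos (s*v))
      = fun v : ℝ => Ekernel (|v|/lam) * Real.cos (s*|v|) := by
    funext v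
    rcases le_or_gt 0 v with h | h
    · rw [abs_of_nonneg h]
    · rw [abs_of_neg h, show (-v)/lam = -(v/lam) by ring, Ekernel_even,
        show s*(-v) = -(s*v) by ring, Real.cos_neg]
  have h2I : ∫ v : ℝ, Ekernel (v/lam) * Real.cos (s*v)
      = 2 * ∫ v in Ioi (0:ℝ), Ekernel (v/lam) * Real.cos (s*v) := by
    conv_lhs => rw [heven]
    exact integral_comp_abs (f := fun v => Ekernel (v/lam) * Real.cos (s*v))
  -- restrict to (0, lam]
  have hzero : ∫ v in Ioi lam, Ekernel (v/lam) * Real.cos (s*v) = 0 := by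
    apply setIntegral_eq_zero_of_forall_eq_zero
    intro x hx
    have hx' : lam < x := hx
    have : 1 ≤ |x/lam| := by
      rw [abs_of_nonneg (div_nonneg (by linarith) hlam.le), le_div_iff₀ hlam]
      linarith
    rw [Ekernel_zero_of_one_le this, zero_mul]
  have hIoo : IntegrableOn (fun v => Ekernel (v/lam) * Real.cos (s*v)) (Ioc 0 lam) :=
    hg_cont.integrableOn_Ioc
  have hIoi : IntegrableOn (fun v => Ekernel (v/lam) * Real.cos (s*v)) (Ioi lam) := by
    apply (integrableOn_zero (μ := volume)).congr_fun _ measurableSet_Ioi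
    intro x hx
    have hx' : lam < x := hx
    have : 1 ≤ |x/lam| := by
      rw [abs_of_nonneg (div_nonneg (by linarith) hlam.le), le_div_iff₀ hlam]
      linarith
    simp [Ekernel_zero_of_one_le this]
  have hsplit : ∫ v in Ioi (0:ℝ), Ekernel (v/lam) * Real.cos (s*v)
      = (∫ v in Ioc (0:ℝ) lam, Ekernel (v/lam) * Real.cos (s*v))
        + ∫ v in Ioi lam, Ekernel (v/lam) * Real.cos (s*v) := by
    rw [← setIntegral_union (Ioc_disjoint_Ioi le_rfl) measurableSet_Ioi hIoo hIoi,
      Ioc_union_Ioi_eq_Ioi hlam.le]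
  -- interval integral and substitution
  have hsub : ∫ v in Ioc (0:ℝ) lam, Ekernel (v/lam) * Real.cos (s*v)
      = lam * ∫ y in (0:ℝ)..1, Ekernel y * Real.cos ((s*lam)*y) := by
    rw [← intervalIntegral.integral_of_le hlam.le]
    have : ∀ x : ℝ, Ekernel (x/lam) * Real.cos (s*x)
        = (fun y => Ekernel y * Real.cos ((s*lam)*y)) (x/lam) := by
      intro x
      simp only
      congr 2
      field_simp
    simp_rw [this]
    rw [intervalIntegral.integral_comp_div (fun y => Ekernel y * Real.cos ((s*lam)*y))
      hlam.ne']
    rw [zero_div, div_self hlam.ne']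
    simp [smul_eq_mul]
  have hc : s * lam ≠ 0 := mul_ne_zero hs hlam.ne'
  rw [h2I, hsplit, hzero, add_zero, hsub, integral_E_cos01 hc]
  have := trig_id (s*lam/4)
  rw [show (4:ℝ)*(s*lam/4) = s*lam by ring] at this
  rw [show s*lam/2 = 2*(s*lam/4) by ring] at *
  rw [this]
  field_simp
  ring

end SinPowFourKernelAux

section SinPowFourKernelAux2

open Real Set Complex FourierTransform

lemma integral_ofReal_add_mul_I (g₁ g₂ : ℝ → ℝ) (h₁ : Integrable g₁) (h₂ : Integrable g₂) :
    ∫ v : ℝ, ((g₁ v : ℂ) + (g₂ v : ℂ) * Complex.I)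
      = ((∫ v : ℝ, g₁ v : ℝ) : ℂ) + ((∫ v : ℝ, g₂ v : ℝ) : ℂ) * Complex.I := by
  have h₁' : Integrable (fun v : ℝ => (g₁ v : ℂ)) volume := h₁.ofReal
  have h₂' : Integrable (fun v : ℝ => (g₂ v : ℂ) * Complex.I) volume := h₂.ofReal.mul_const _
  rw [integral_add h₁' h₂']
  congr 1
  · exact integral_ofReal
  simp_rw [show ∀ v : ℝ, (g₂ v : ℂ) * Complex.I = (g₂ v) • Complex.I from
    fun v => Complex.real_smul.symm]
  rw [integral_smul_const, Complex.real_smul]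

lemma fr_integrable (lam : ℝ) (hlam : 0 < lam) :
    Integrable (fun v : ℝ => Ekernel (v/lam)) := by
  apply Continuous.integrable_of_hasCompactSupport
  · exact Ekernel_continuous.comp (by fun_prop)
  · apply HasCompactSupport.intro (isCompact_Icc (a := -lam) (b := lam))
    intro x hx
    simp only [mem_Icc, not_and_or, not_le] at hx
    apply Ekernel_zero_of_one_le
    rw [abs_div, abs_of_pos hlam, le_div_iff₀ hlam, one_mul]
    rcases hx with h | h
    · rw [abs_of_neg (by linarith)]; linarith
    · rw [abs_of_pos (by linarith)]; linarith

lemma fr_cos_integrable (lam : ℝ) (hlam : 0 < lam) (s : ℝ) :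
    Integrable (fun v : ℝ => Ekernel (v/lam) * Real.cos (s*v)) := by
  have := Integrable.bdd_mul (f := fun v : ℝ => Real.cos (s*v))
    (fr_integrable lam hlam) (Continuous.aestronglyMeasurable (by continuity))
    (c := 1) (ae_of_all _ fun v => by rw [Real.norm_eq_abs]; exact Real.abs_cos_le_one _)
  simpa [mul_comm] using this

lemma fr_sin_integrable (lam : ℝ) (hlam : 0 < lam) (s : ℝ) :
    Integrable (fun v : ℝ => Ekernel (v/lam) * Real.sin (s*v)) := by
  have := Integrable.bdd_mul (f := fun v : ℝ => Real.sin (s*v))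
    (fr_integrable lam hlam) (Continuous.aestronglyMeasurable (by continuity))
    (c := 1) (ae_of_all _ fun v => by rw [Real.norm_eq_abs]; exact Real.abs_sin_le_one _)
  simpa [mul_comm] using this

lemma sin_part_zero (lam : ℝ) (s : ℝ) :
    ∫ v : ℝ, Ekernel (v/lam) * Real.sin (s*v) = 0 := by
  have h := integral_neg_eq_self (fun v : ℝ => Ekernel (v/lam) * Real.sin (s*v)) volume
  simp only [show ∀ v : ℝ, Ekernel (-v/lam) * Real.sin (s*(-v))
      = -(Ekernel (v/lam) * Real.sin (s*v)) from fun v => by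
        rw [show (-v)/lam = -(v/lam) by ring, Ekernel_even, show s*(-v) = -(s*v) by ring,
          Real.sin_neg]; ring] at h
  rw [integral_neg] at h
  linarith

lemma fourier_eval (lam : ℝ) (hlam : 0 < lam) {t : ℝ} (ht : t ≠ 0) :
    𝓕 (fun v : ℝ => (Ekernel (v/lam) : ℂ)) t
      = ((192 * Real.sin (π*lam*t/2)^4 / (lam^3 * (2*π*t)^4) : ℝ) : ℂ) := by
  rw [Real.fourier_real_eq_integral_exp_smul]
  have key : ∀ v : ℝ, Complex.exp (↑(-2 * π * v * t) * Complex.I) • (Ekernel (v/lam) : ℂ)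
      = ((Ekernel (v/lam) * Real.cos ((2*π*t)*v) : ℝ) : ℂ)
        + ((-(Ekernel (v/lam) * Real.sin ((2*π*t)*v)) : ℝ) : ℂ) * Complex.I := by
    intro v
    rw [smul_eq_mul, Complex.exp_mul_I, ← Complex.ofReal_cos, ← Complex.ofReal_sin,
      show (-2 * π * v * t : ℝ) = -(2*π*t*v) by ring, Real.cos_neg, Real.sin_neg]
    push_cast
    ring
  simp_rw [key]
  rw [integral_ofReal_add_mul_I (fun v => Ekernel (v/lam) * Real.cos ((2*π*t)*v))
    (fun v => -(Ekernel (v/lam) * Real.sin ((2*π*t)*v))) (fr_cos_integrable lam hlam _)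
    ((fr_sin_integrable lam hlam (2*π*t)).neg)]
  rw [integral_neg, sin_part_zero lam, neg_zero, Complex.ofReal_zero, zero_mul, add_zero]
  have h2pt : (2*π*t) ≠ 0 := by
    have := Real.pi_ne_zero; positivity
  rw [integral_E_cos_real lam hlam h2pt]
  rw [Complex.ofReal_inj]
  rw [show 2*π*t*lam/4 = π*lam*t/2 by ring]
  rw [show (2*π*t*lam)^4 = lam^3*(2*π*t)^4 * lam by ring]
  field_simp

lemma integrable_inv_one_add_pow4 : Integrable (fun x : ℝ => (1+x^4)⁻¹) := by
  have h0 : Integrable (fun x : ℝ => (1+x^2)⁻¹) := integrable_inv_one_add_sq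
  apply (h0.const_mul 2).mono'
    (Continuous.aestronglyMeasurable (Continuous.inv₀ (by continuity) (fun x => by positivity)))
  filter_upwards with x
  simp only [Real.norm_eq_abs, Pi.inv_apply]
  rw [abs_of_pos (by positivity : (0:ℝ) < (1+x^4)⁻¹)]
  have hpos : (0:ℝ) < (1+x^2)/2 := by positivity
  have hle : (1+x^2)/2 ≤ 1+x^4 := by nlinarith [sq_nonneg (x^2-1)]
  calc (1+x^4)⁻¹ ≤ ((1+x^2)/2)⁻¹ := by
        apply inv_anti₀ hpos hle
    _ = 2*(1+x^2)⁻¹ := by field_simp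

lemma sin_pow4_le_one (x : ℝ) : Real.sin x ^ 4 ≤ 1 := by
  nlinarith [Real.sin_sq_le_one x, sq_nonneg (Real.sin x)]

lemma sin_pow4_le_pow4 (x : ℝ) : Real.sin x ^ 4 ≤ x ^ 4 := by
  have h := Real.abs_sin_le_abs (x := x)
  have e1 : |Real.sin x|^4 = Real.sin x^4 := by
    rw [pow_abs, _root_.abs_of_nonneg (by positivity : (0:ℝ) ≤ Real.sin x ^ 4)]
  have e2 : |x|^4 = x^4 := by rw [pow_abs, _root_.abs_of_nonneg (by positivity : (0:ℝ) ≤ x ^ 4)]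
  calc Real.sin x ^ 4 = |Real.sin x|^4 := e1.symm
    _ ≤ |x|^4 := pow_le_pow_left₀ (abs_nonneg _) h 4
    _ = x^4 := e2

section Main

variable (lam : ℝ) (hlam : 0 < lam) (ν : ℝ)

lemma fourier_integrable (lam : ℝ) (hlam : 0 < lam) :
    Integrable (𝓕 (fun v : ℝ => (Ekernel (v/lam) : ℂ))) := by
  set f : ℝ → ℂ := fun v : ℝ => (Ekernel (v/lam) : ℂ) with hf
  set B : ℝ := ∫ v : ℝ, ‖f v‖ with hBdef
  set A : ℝ := 192/(lam^3*(2*π)^4) with hAdef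
  have hA0 : 0 ≤ A := by rw [hAdef]; positivity
  have hfi : Integrable f := (fr_integrable lam hlam).ofReal
  have hB : ∀ t : ℝ, ‖𝓕 f t‖ ≤ B :=
    fun t => VectorFourier.norm_fourierIntegral_le_integral_norm _ _ _ _ _
  have hFcont : Continuous (𝓕 f) :=
    VectorFourier.fourierIntegral_continuous Real.continuous_fourierChar continuous_inner hfi
  have hpt : ∀ t : ℝ, ‖𝓕 f t‖ * (1+t^4) ≤ B + A := by
    intro t
    rcases eq_or_ne t 0 with rfl | ht
    · rw [show (1:ℝ)+(0:ℝ)^4 = 1 by norm_num, mul_one]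
      linarith [hB 0]
    · rw [fourier_eval lam hlam ht]
      have hKnn : (0:ℝ) ≤ 192 * Real.sin (π*lam*t/2)^4 / (lam^3 * (2*π*t)^4) := by positivity
      rw [Complex.norm_real, Real.norm_eq_abs, _root_.abs_of_nonneg hKnn]
      have hb1 : 192 * Real.sin (π*lam*t/2)^4 / (lam^3 * (2*π*t)^4) ≤ B := by
        have := hB t
        rw [fourier_eval lam hlam ht, Complex.norm_real, Real.norm_eq_abs,
          _root_.abs_of_nonneg hKnn] at this
        exact this
      have hb2 : 192 * Real.sin (π*lam*t/2)^4 / (lam^3 * (2*π*t)^4) * t^4 ≤ A := by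
        have hs := sin_pow4_le_one (π*lam*t/2)
        have heq : 192 * Real.sin (π*lam*t/2)^4 / (lam^3 * (2*π*t)^4) * t^4
            = A * Real.sin (π*lam*t/2)^4 := by
          rw [hAdef]
          field_simp
        rw [heq]
        nlinarith [hs, hA0]
      nlinarith [hb1, hb2]
  apply (integrable_inv_one_add_pow4.const_mul (B+A)).mono' hFcont.aestronglyMeasurable
  filter_upwards with t
  have h1 : (0:ℝ) < 1 + t^4 := by positivity
  rw [← div_eq_mul_inv, le_div_iff₀ h1]
  exact hpt t

end Main


end SinPowFourKernelAux2

section SinPowFourKernelMain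
open Real Set Complex FourierTransform

/-- For every `λ > 0` and real `ν`, the absolutely convergent integral
`(3/(4π)) ∫₀^∞ sin⁴(λt/4)/(λ³(t/4)⁴) · cos(νt) dt` equals `E(ν/λ)`. -/
theorem integral_sin_pow_four_kernel (lam : ℝ) (hlam : 0 < lam) (ν : ℝ) :
    IntegrableOn
        (fun t : ℝ => Real.sin (lam * t / 4) ^ 4 / (lam ^ 3 * (t / 4) ^ 4) * Real.cos (ν * t))
        (Set.Ioi 0) ∧
      3 / (4 * Real.pi) *
          ∫ t in Set.Ioi (0 : ℝ),
            Real.sin (lam * t / 4) ^ 4 / (lam ^ 3 * (t / 4) ^ 4) * Real.cos (ν * t) =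
        Ekernel (ν / lam) := by
  have hpi := Real.pi_pos
  -- Part 1: integrability
  have hmeas : AEStronglyMeasurable
      (fun t : ℝ => Real.sin (lam * t / 4) ^ 4 / (lam ^ 3 * (t / 4) ^ 4) * Real.cos (ν * t))
      (volume.restrict (Ioi 0)) := by
    apply ContinuousOn.aestronglyMeasurable _ measurableSet_Ioi
    apply ContinuousOn.mul _ (Continuous.continuousOn (by continuity))
    apply ContinuousOn.div (Continuous.continuousOn (by continuity))
      (Continuous.continuousOn (by continuity))
    intro t ht
    have : (0:ℝ) < t := ht
    positivity
  have hbound : ∀ t : ℝ, t ∈ Ioi (0:ℝ) →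
      ‖Real.sin (lam * t / 4) ^ 4 / (lam ^ 3 * (t / 4) ^ 4) * Real.cos (ν * t)‖
        ≤ (lam + 256/lam^3) * (1+t^4)⁻¹ := by
    intro t ht
    have ht0 : (0:ℝ) < t := ht
    have hd : (0:ℝ) < lam ^ 3 * (t / 4) ^ 4 := by positivity
    have hnn : (0:ℝ) ≤ Real.sin (lam * t / 4) ^ 4 / (lam ^ 3 * (t / 4) ^ 4) := by positivity
    have hcos : |Real.cos (ν * t)| ≤ 1 := Real.abs_cos_le_one _
    rw [Real.norm_eq_abs, abs_mul, _root_.abs_of_nonneg hnn]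
    have h1 : Real.sin (lam * t / 4) ^ 4 / (lam ^ 3 * (t / 4) ^ 4) ≤ lam := by
      rw [div_le_iff₀ hd]
      calc Real.sin (lam * t / 4) ^ 4 ≤ (lam * t / 4) ^ 4 := sin_pow4_le_pow4 _
        _ = lam * (lam ^ 3 * (t / 4) ^ 4) := by ring
    have h2 : Real.sin (lam * t / 4) ^ 4 / (lam ^ 3 * (t / 4) ^ 4) * t^4 ≤ 256/lam^3 := by
      rw [div_mul_eq_mul_div, div_le_div_iff₀ hd (by positivity)]
      calc Real.sin (lam * t / 4) ^ 4 * t ^ 4 * lam ^ 3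
          ≤ 1 * t ^ 4 * lam ^ 3 := by
            have := sin_pow4_le_one (lam * t / 4)
            have h4 : (0:ℝ) < t^4 * lam^3 := by positivity
            nlinarith
        _ = 256 * (lam ^ 3 * (t/4) ^ 4) := by ring
    rw [← div_eq_mul_inv, le_div_iff₀ (by positivity : (0:ℝ) < 1 + t^4)]
    have hle : Real.sin (lam * t / 4) ^ 4 / (lam ^ 3 * (t / 4) ^ 4) * |Real.cos (ν*t)|
        ≤ Real.sin (lam * t / 4) ^ 4 / (lam ^ 3 * (t / 4) ^ 4) := by
      nlinarith [abs_nonneg (Real.cos (ν*t))]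
    nlinarith [abs_nonneg (Real.cos (ν*t)), mul_le_mul_of_nonneg_right hle
      (le_of_lt (by positivity : (0:ℝ) < t^4))]
  have hInt : IntegrableOn
      (fun t : ℝ => Real.sin (lam * t / 4) ^ 4 / (lam ^ 3 * (t / 4) ^ 4) * Real.cos (ν * t))
      (Ioi 0) := by
    apply Integrable.mono'
      ((integrable_inv_one_add_pow4.const_mul (lam + 256/lam^3)).integrableOn) hmeas
    rw [ae_restrict_iff' measurableSet_Ioi]
    exact ae_of_all _ hbound
  refine ⟨hInt, ?_⟩
  -- Part 2: the value, via Fourier inversion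
  set f : ℝ → ℂ := fun v : ℝ => (Ekernel (v/lam) : ℂ) with hfdef
  have hfi : Integrable f := (fr_integrable lam hlam).ofReal
  have hfc : Continuous f := Complex.continuous_ofReal.comp
    (Ekernel_continuous.comp (by continuity))
  have hinv : 𝓕⁻ (𝓕 f) ν = f ν :=
    hfi.fourierInv_fourier_eq (fourier_integrable lam hlam) hfc.continuousAt
  rw [Real.fourierInv_eq_fourier_neg,
    Real.fourier_real_eq_integral_exp_smul] at hinv
  set Kc : ℝ → ℝ := fun t => 192 * Real.sin (π*lam*t/2)^4 / (lam^3 * (2*π*t)^4) with hKcdef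
  have hKc_even : ∀ t : ℝ, Kc (-t) = Kc t := by
    intro t
    rw [hKcdef]
    simp only
    rw [show π*lam*(-t)/2 = -(π*lam*t/2) by ring, Real.sin_neg,
      show 2*π*(-t) = -(2*π*t) by ring, Even.neg_pow ⟨2, rfl⟩, Even.neg_pow ⟨2, rfl⟩]
  have hKc_int : Integrable Kc := by
    apply ((fourier_integrable lam hlam).re).congr
    have h0 : ∀ᵐ t : ℝ, t ≠ 0 := by
      refine ae_iff.mpr ?_
      simp only [ne_eq, not_not]
      rw [show {a : ℝ | a = 0} = {0} by ext x; simp]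
      exact Real.volume_singleton
    filter_upwards [h0] with t ht
    rw [fourier_eval lam hlam ht, hKcdef]
    exact Complex.ofReal_re _
  have hKcos_int : ∀ s : ℝ, Integrable (fun t => Kc t * Real.cos (s*t)) := by
    intro s
    have := Integrable.bdd_mul (f := fun t : ℝ => Real.cos (s*t)) hKc_int
      (Continuous.aestronglyMeasurable (by fun_prop))
      (c := 1) (ae_of_all _ fun v => by rw [Real.norm_eq_abs]; exact Real.abs_cos_le_one _)
    simpa [mul_comm] using this
  have hKsin_int : ∀ s : ℝ, Integrable (fun t => Kc t * Real.sin (s*t)) := by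
    intro s
    have := Integrable.bdd_mul (f := fun t : ℝ => Real.sin (s*t)) hKc_int
      (Continuous.aestronglyMeasurable (by fun_prop))
      (c := 1) (ae_of_all _ fun v => by rw [Real.norm_eq_abs]; exact Real.abs_sin_le_one _)
    simpa [mul_comm] using this
  have hsin_zero : ∫ t : ℝ, Kc t * Real.sin ((2*π*ν)*t) = 0 := by
    have h := integral_neg_eq_self (fun t : ℝ => Kc t * Real.sin ((2*π*ν)*t)) volume
    simp only [show ∀ t : ℝ, Kc (-t) * Real.sin ((2*π*ν)*(-t))
        = -(Kc t * Real.sin ((2*π*ν)*t)) from fun t => by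
          rw [hKc_even, show (2*π*ν)*(-t) = -((2*π*ν)*t) by ring, Real.sin_neg]; ring] at h
    rw [integral_neg] at h
    linarith
  -- rewrite the inversion integral
  have hstep : ∫ t : ℝ, Complex.exp (↑(-2 * π * t * (-ν)) * Complex.I) • 𝓕 f t
      = ((∫ t : ℝ, Kc t * Real.cos ((2*π*ν)*t) : ℝ) : ℂ) := by
    have h0 : ∀ᵐ t : ℝ, t ≠ 0 := by
      refine ae_iff.mpr ?_
      simp only [ne_eq, not_not]
      rw [show {a : ℝ | a = 0} = {0} by ext x; simp]
      exact Real.volume_singleton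
    have hcongr : ∀ᵐ t : ℝ, Complex.exp (↑(-2 * π * t * (-ν)) * Complex.I) • 𝓕 f t
        = ((Kc t * Real.cos ((2*π*ν)*t) : ℝ) : ℂ)
          + ((Kc t * Real.sin ((2*π*ν)*t) : ℝ) : ℂ) * Complex.I := by
      filter_upwards [h0] with t ht
      rw [fourier_eval lam hlam ht, smul_eq_mul, Complex.exp_mul_I,
        ← Complex.ofReal_cos, ← Complex.ofReal_sin,
        show (-2*π*t*(-ν) : ℝ) = (2*π*ν)*t by ring]
      simp only [hKcdef]
      push_cast
      ring
    rw [integral_congr_ae hcongr,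
      integral_ofReal_add_mul_I _ _ (hKcos_int _) (hKsin_int _), hsin_zero]
    norm_num
  rw [hstep] at hinv
  have IK : ∫ t : ℝ, Kc t * Real.cos ((2*π*ν)*t) = Ekernel (ν/lam) := by
    have := hinv
    simp only [hfdef] at this
    exact_mod_cast this
  -- evenness
  have heven : (fun t : ℝ => Kc t * Real.cos ((2*π*ν)*t))
      = fun t : ℝ => Kc |t| * Real.cos ((2*π*ν)*|t|) := by
    funext t
    rcases le_or_gt 0 t with h | h
    · rw [_root_.abs_of_nonneg h]
    · rw [abs_of_neg h, hKc_even, show (2*π*ν)*(-t) = -((2*π*ν)*t) by ring, Real.cos_neg]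
  have h2I : ∫ t : ℝ, Kc t * Real.cos ((2*π*ν)*t)
      = 2 * ∫ t in Ioi (0:ℝ), Kc t * Real.cos ((2*π*ν)*t) := by
    conv_lhs => rw [heven]
    exact integral_comp_abs (f := fun t => Kc t * Real.cos ((2*π*ν)*t))
  -- substitution u = 2πt
  set g : ℝ → ℝ := fun u => 192 * Real.sin (lam*u/4)^4 / (lam^3 * u^4) * Real.cos (ν*u)
    with hgdef
  have hqg : ∀ t : ℝ, Kc t * Real.cos ((2*π*ν)*t) = g (2*π*t) := by
    intro t
    rw [hgdef, hKcdef]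
    simp only
    rw [show lam*(2*π*t)/4 = π*lam*t/2 by ring, show ν*(2*π*t) = (2*π*ν)*t by ring,
      show (2*π*t)^4 = (2*π*t)^4 from rfl]
  have hsub : ∫ t in Ioi (0:ℝ), Kc t * Real.cos ((2*π*ν)*t)
      = (2*π)⁻¹ * ∫ u in Ioi (0:ℝ), g u := by
    simp_rw [hqg]
    have := integral_comp_mul_left_Ioi g 0 (by positivity : (0:ℝ) < 2*π)
    rw [mul_zero] at this
    rw [this, smul_eq_mul]
  have hg34 : ∀ u : ℝ, g u
      = 3/4 * (Real.sin (lam * u / 4) ^ 4 / (lam ^ 3 * (u / 4) ^ 4) * Real.cos (ν * u)) := by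
    intro u
    rw [hgdef]
    simp only
    rcases eq_or_ne u 0 with rfl | hu
    · simp
    · field_simp
      ring
  have hgint : ∫ u in Ioi (0:ℝ), g u
      = 3/4 * ∫ u in Ioi (0:ℝ),
          Real.sin (lam * u / 4) ^ 4 / (lam ^ 3 * (u / 4) ^ 4) * Real.cos (ν * u) := by
    simp_rw [hg34]
    exact integral_const_mul _ _
  rw [h2I, hsub, hgint] at IK
  rw [← IK]
  ring

end SinPowFourKernelMain
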